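/- Let k ≥ 2 be an integer, c_1, …, c_k complex numbers with c_2 ≠ 0, and n ≥ 1. If H_{k,n} and L_{k,n} are formed with t_j = c_j for 1 ≤ j ≤ k, then per(H_{k,n}) = f^1_{k,n} and per(L_{k,n}) = f^1_{k,n}. -/

import Mathlib

open Finset

noncomputable def perH (m : ℕ) (a : ℕ → ℕ → ℂ) : ℂ :=
  ∑ σ : Equiv.Perm (Fin m), ∏ i : Fin m, a (i.1 + 1) ((σ i).1 + 1)

/-- Entry (r,s) (1-based) of the matrix `H_{k,n}`:
`i^{r-s} * t_{r-s+1} / t_2^{r-s}` if `-1 ≤ r-s < k`, and `0` otherwise. -/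
noncomputable def hEntry (k : ℕ) (t : ℤ → ℂ) (r s : ℕ) : ℂ :=
  if -1 ≤ (r : ℤ) - s ∧ (r : ℤ) - s < k then
    Complex.I ^ ((r : ℤ) - s) * t ((r : ℤ) - s + 1) / t 2 ^ ((r : ℤ) - s)
  else 0

/-- Entry (i,j) (1-based) of the matrix `L_{k,n}`:
`t_{i-j+1} / t_2^{i-j}` if `-1 ≤ i-j < k`, and `0` otherwise. -/
noncomputable def lEntry (k : ℕ) (t : ℤ → ℂ) (i j : ℕ) : ℂ :=
  if -1 ≤ (i : ℤ) - j ∧ (i : ℤ) - j < k then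
    t ((i : ℤ) - j + 1) / t 2 ^ ((i : ℤ) - j)
  else 0

lemma perH_zero (a : ℕ → ℕ → ℂ) : perH 0 a = 1 := by
  rw [perH]
  simp

section ext

variable {n s : ℕ}

/-- the extension function: `i ↦ τ i` for `i < s`, `i ↦ i+1` for `s ≤ i < n`, `n ↦ s`. -/
noncomputable def extFun (hs : s ≤ n) (τ : Equiv.Perm (Fin s)) (i : Fin (n+1)) : Fin (n+1) :=
  if h : (i : ℕ) < s then ⟨(τ ⟨i, h⟩ : ℕ), by have := (τ ⟨i, h⟩).isLt; omega⟩
  else if h2 : (i : ℕ) < n then ⟨(i : ℕ) + 1, by omega⟩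
  else ⟨s, by omega⟩

lemma extFun_inj (hs : s ≤ n) (τ : Equiv.Perm (Fin s)) :
    Function.Injective (extFun hs τ) := by
  intro i j hij
  unfold extFun at hij
  apply Fin.ext
  split_ifs at hij with h1 h2 h3 h4 h5 h6 h7 h8 <;>
    rw [Fin.mk.injEq] at hij <;>
    [skip; skip; skip; skip; omega; omega; skip; omega; omega]
  · have h9 : (⟨(i : ℕ), h1⟩ : Fin s) = ⟨(j : ℕ), h2⟩ := τ.injective (Fin.ext hij)
    have h10 : ((⟨(i : ℕ), h1⟩ : Fin s) : ℕ) = ((⟨(j : ℕ), h2⟩ : Fin s) : ℕ) :=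
      congrArg Fin.val h9
    exact h10
  · have := (τ ⟨(i : ℕ), h1⟩).isLt; omega
  · have := (τ ⟨(i : ℕ), h1⟩).isLt; omega
  · have := (τ ⟨(j : ℕ), h5⟩).isLt; omega
  · have := (τ ⟨(j : ℕ), h7⟩).isLt; omega

/-- The permutation of `Fin (n+1)` extending `τ` by the forced path `s → s+1 → ⋯ → n → s`. -/
noncomputable def extPerm (hs : s ≤ n) (τ : Equiv.Perm (Fin s)) : Equiv.Perm (Fin (n+1)) :=
  Equiv.ofBijective (extFun hs τ) (Finite.injective_iff_bijective.mp (extFun_inj hs τ))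

lemma extPerm_apply (hs : s ≤ n) (τ : Equiv.Perm (Fin s)) (i : Fin (n+1)) :
    extPerm hs τ i = extFun hs τ i := rfl

lemma extPerm_inj (hs : s ≤ n) : Function.Injective (extPerm hs) := by
  intro τ τ' h
  ext j
  have hj : (j : ℕ) < n + 1 := by have := j.isLt; omega
  have := congrArg (fun σ : Equiv.Perm (Fin (n+1)) => σ ⟨(j : ℕ), hj⟩) h
  simp only [extPerm_apply, extFun, dif_pos j.isLt, Fin.eta] at this
  rw [Fin.mk.injEq] at this
  exact this

lemma forced_step {n : ℕ} (σ : Equiv.Perm (Fin (n+1)))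
    (hσ : ∀ i : Fin (n+1), ((σ i) : ℕ) ≤ (i : ℕ) + 1)
    {s : ℕ} (hs : ((σ ⟨n, n.lt_succ_self⟩) : ℕ) = s)
    (j : ℕ) (hj2 : j < n) (hj1 : s ≤ j)
    (ih : ∀ m : Fin (n+1), j < (m : ℕ) → (m : ℕ) < n → ((σ m) : ℕ) = (m : ℕ) + 1)
    (hj : j < n + 1) : ((σ ⟨j, hj⟩) : ℕ) = j + 1 := by
  set x : Fin (n+1) := ⟨j+1, by omega⟩ with hx
  have hmval : ((σ (σ.symm x)) : ℕ) = j + 1 := by rw [Equiv.apply_symm_apply]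
  set m := σ.symm x with hm
  have h1 : j ≤ (m : ℕ) := by have := hσ m; omega
  have hmn : (m : ℕ) ≠ n := by
    intro h
    have he : m = ⟨n, n.lt_succ_self⟩ := Fin.ext h
    rw [he] at hmval
    omega
  rcases eq_or_lt_of_le h1 with h | h
  · have he : (⟨j, hj⟩ : Fin (n+1)) = m := Fin.ext h
    rw [he]
    exact hmval
  · exfalso
    have hmlt : (m : ℕ) < n := by have := m.isLt; omega
    have := ih m h hmlt
    omega

lemma forced {n : ℕ} (σ : Equiv.Perm (Fin (n+1)))
    (hσ : ∀ i : Fin (n+1), ((σ i) : ℕ) ≤ (i : ℕ) + 1)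
    {s : ℕ} (hs : ((σ ⟨n, n.lt_succ_self⟩) : ℕ) = s) :
    ∀ (j : ℕ), j < n → s ≤ j → ∀ hj, ((σ ⟨j, hj⟩) : ℕ) = j + 1 := by
  suffices H : ∀ t j, j < n → s ≤ j → n - 1 - j ≤ t → ∀ hj, ((σ ⟨j, hj⟩) : ℕ) = j + 1 by
    exact fun j hj2 hj1 hj => H (n - 1 - j) j hj2 hj1 le_rfl hj
  intro t
  induction t with
  | zero =>
    intro j hj2 hj1 hle hj
    exact forced_step σ hσ hs j hj2 hj1 (fun m hm1 hm2 => absurd hm1 (by omega)) hj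
  | succ t iht =>
    intro j hj2 hj1 hle hj
    refine forced_step σ hσ hs j hj2 hj1 (fun m hm1 hm2 => ?_) hj
    have := iht (m : ℕ) hm2 (by omega) (by omega) (by omega)
    rwa [Fin.eta] at this

lemma extPerm_last {n s : ℕ} (hs : s ≤ n) (τ : Equiv.Perm (Fin s)) :
    ((extPerm hs τ (Fin.last n)) : ℕ) = s := by
  rw [extPerm_apply]
  unfold extFun
  rw [dif_neg (by simp [Fin.last]; omega), dif_neg (by simp [Fin.last])]

lemma hterm {n s : ℕ} (hs : s ≤ n) (a : ℕ → ℕ → ℂ) (τ : Equiv.Perm (Fin s)) :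
    (∏ i : Fin (n+1), a (i.1 + 1) ((extPerm hs τ i).1 + 1))
    = a (n+1) (s+1) * (∏ i ∈ Ico s n, a (i+1) (i+2)) *
      ∏ j : Fin s, a (j.1 + 1) ((τ j).1 + 1) := by
  rw [Fin.prod_univ_castSucc]
  have hlast : a ((Fin.last n).1 + 1) ((extPerm hs τ (Fin.last n)).1 + 1) = a (n+1) (s+1) := by
    rw [extPerm_last]
    rfl
  rw [hlast]
  simp only [Fin.coe_castSucc]
  have hmid : ∀ i : Fin n, ¬ ((i : ℕ) < s) →
      ((extPerm hs τ i.castSucc) : ℕ) = (i : ℕ) + 1 := by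
    intro i hi
    rw [extPerm_apply]
    unfold extFun
    rw [dif_neg (by simpa using hi), dif_pos (by simpa using i.isLt)]
    simp
  have hlow : ∀ (i : Fin n) (hi : (i : ℕ) < s),
      ((extPerm hs τ i.castSucc) : ℕ) = ((τ ⟨(i : ℕ), hi⟩) : ℕ) := by
    intro i hi
    rw [extPerm_apply]
    unfold extFun
    rw [dif_pos (by simpa using hi)]
    simp
  -- convert to a range product
  set w : ℕ → ℂ := fun i =>
    if h : i < s then a (i+1) (((τ ⟨i, h⟩) : ℕ) + 1) else a (i+1) (i+2) with hw
  have hA : (∏ i : Fin n, a (i.1 + 1) ((extPerm hs τ i.castSucc).1 + 1))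
      = ∏ i ∈ range n, w i := by
    rw [Finset.prod_range]
    apply Finset.prod_congr rfl
    intro i _
    by_cases hi : (i : ℕ) < s
    · rw [hlow i hi]
      simp only [hw]
      rw [dif_pos hi]
    · rw [hmid i hi]
      simp only [hw]
      rw [dif_neg hi]
  rw [hA, ← Finset.prod_range_mul_prod_Ico w hs]
  have hB : (∏ i ∈ range s, w i) = ∏ j : Fin s, a (j.1 + 1) ((τ j).1 + 1) := by
    rw [Finset.prod_range]
    apply Finset.prod_congr rfl
    intro j _
    simp only [hw]
    rw [dif_pos j.isLt, Fin.eta]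
  have hC : (∏ i ∈ Ico s n, w i) = ∏ i ∈ Ico s n, a (i+1) (i+2) := by
    apply Finset.prod_congr rfl
    intro i hi
    simp only [hw]
    rw [dif_neg (by simp only [mem_Ico] at hi; omega)]
  rw [hB, hC]
  ring

lemma hess_fiber (a : ℕ → ℕ → ℂ) (ha : ∀ r s : ℕ, r + 1 < s → a r s = 0) (n : ℕ)
    (s : Fin (n+1)) :
    (∑ σ ∈ univ.filter (fun σ : Equiv.Perm (Fin (n+1)) => σ ⟨n, n.lt_succ_self⟩ = s),
        ∏ i : Fin (n+1), a (i.1 + 1) ((σ i).1 + 1))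
    = a (n+1) ((s : ℕ)+1) * (∏ i ∈ Ico (s : ℕ) n, a (i+1) (i+2)) * perH (s : ℕ) a := by
  have hs : (s : ℕ) ≤ n := by have := s.isLt; omega
  have hsub : (univ.map ⟨extPerm hs, extPerm_inj hs⟩ : Finset (Equiv.Perm (Fin (n+1)))) ⊆
      univ.filter (fun σ => σ ⟨n, n.lt_succ_self⟩ = s) := by
    intro σ hσ
    simp only [mem_map, mem_univ, true_and, Function.Embedding.coeFn_mk] at hσ
    obtain ⟨τ, rfl⟩ := hσ
    simp only [mem_filter, mem_univ, true_and]
    apply Fin.ext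
    have : (Fin.last n) = (⟨n, n.lt_succ_self⟩ : Fin (n+1)) := rfl
    rw [← this, extPerm_last]
  have hzero : ∀ σ ∈ univ.filter (fun σ : Equiv.Perm (Fin (n+1)) => σ ⟨n, n.lt_succ_self⟩ = s),
      σ ∉ (univ.map ⟨extPerm hs, extPerm_inj hs⟩ : Finset (Equiv.Perm (Fin (n+1)))) →
      (∏ i : Fin (n+1), a (i.1 + 1) ((σ i).1 + 1)) = 0 := by
    intro σ hσf hσm
    simp only [mem_filter, mem_univ, true_and] at hσf
    by_cases hbig : ∀ i : Fin (n+1), ((σ i) : ℕ) ≤ (i : ℕ) + 1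
    · exfalso
      apply hσm
      have hval : ((σ ⟨n, n.lt_succ_self⟩) : ℕ) = (s : ℕ) := congrArg Fin.val hσf
      have hlt : ∀ (j : ℕ) (hj : j < (s : ℕ)), ((σ ⟨j, by omega⟩) : ℕ) < (s : ℕ) := by
        intro j hj
        have h1 := hbig ⟨j, by omega⟩
        simp only at h1
        rcases lt_or_eq_of_le (le_trans h1 (by omega : j + 1 ≤ (s : ℕ))) with h | h
        · exact h
        · exfalso
          have he : σ ⟨j, by omega⟩ = σ ⟨n, n.lt_succ_self⟩ := by
            apply Fin.ext
            rw [h, hval]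
          have := congrArg Fin.val (σ.injective he)
          simp only at this
          omega
      let g : Fin (s : ℕ) → Fin (s : ℕ) :=
        fun j => ⟨((σ ⟨(j : ℕ), by omega⟩) : ℕ), hlt (j : ℕ) j.isLt⟩
      have hginj : Function.Injective g := by
        intro x y hxy
        have hv : ((g x) : ℕ) = ((g y) : ℕ) := congrArg Fin.val hxy
        have h2 : (⟨(x : ℕ), by omega⟩ : Fin (n+1)) = ⟨(y : ℕ), by omega⟩ :=
          σ.injective (Fin.ext hv)
        simp only [Fin.mk.injEq] at h2
        exact Fin.ext h2
      refine mem_map.mpr ⟨Equiv.ofBijective g (Finite.injective_iff_bijective.mp hginj),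
        mem_univ _, ?_⟩
      simp only [Function.Embedding.coeFn_mk]
      ext i
      rw [extPerm_apply]
      unfold extFun
      by_cases h1 : (i : ℕ) < (s : ℕ)
      · rw [dif_pos h1]
        show ((g ⟨(i : ℕ), h1⟩ : Fin (s : ℕ)) : ℕ) = _
        show ((σ ⟨(i : ℕ), by omega⟩) : ℕ) = _
        rw [Fin.eta]
      · rw [dif_neg h1]
        by_cases h2 : (i : ℕ) < n
        · rw [dif_pos h2]
          have := forced σ hbig hval (i : ℕ) h2 (by omega) (by omega)
          rw [Fin.eta] at this
          exact this.symm
        · rw [dif_neg h2]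
          have h3 : i = ⟨n, n.lt_succ_self⟩ := Fin.ext (by
            show (i : ℕ) = n
            have := i.isLt
            omega)
          have h4 : ((σ i) : ℕ) = (s : ℕ) := by rw [h3]; exact hval
          exact h4.symm
    · push_neg at hbig
      obtain ⟨i, hi⟩ := hbig
      apply Finset.prod_eq_zero (mem_univ i)
      exact ha ((i : ℕ) + 1) (((σ i) : ℕ) + 1) (by omega)
  rw [← Finset.sum_subset hsub hzero, Finset.sum_map]
  simp only [Function.Embedding.coeFn_mk]
  have : ∀ τ : Equiv.Perm (Fin (s : ℕ)),
      (∏ i : Fin (n+1), a (i.1 + 1) ((extPerm hs τ i).1 + 1))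
      = a (n+1) ((s : ℕ)+1) * (∏ i ∈ Ico (s : ℕ) n, a (i+1) (i+2)) *
        ∏ j : Fin (s : ℕ), a (j.1 + 1) ((τ j).1 + 1) := fun τ => hterm hs a τ
  rw [Finset.sum_congr rfl (fun τ _ => this τ), ← Finset.mul_sum]
  rfl

lemma hess_expand (a : ℕ → ℕ → ℂ) (ha : ∀ r s : ℕ, r + 1 < s → a r s = 0) (n : ℕ) :
    perH (n+1) a = ∑ s ∈ range (n+1),
      a (n+1) (s+1) * (∏ i ∈ Ico s n, a (i+1) (i+2)) * perH s a := by
  rw [perH, ← Finset.sum_fiberwise univ (fun σ : Equiv.Perm (Fin (n+1)) => σ ⟨n, n.lt_succ_self⟩)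
    (fun σ => ∏ i : Fin (n+1), a (i.1 + 1) ((σ i).1 + 1))]
  rw [Finset.sum_congr rfl (fun s _ => hess_fiber a ha n s)]
  exact Fin.sum_univ_eq_sum_range
    (fun s => a (n+1) (s+1) * (∏ i ∈ Ico s n, a (i+1) (i+2)) * perH s a) (n+1)

lemma perH_eq (k : ℕ) (c : ℤ → ℂ) (f₁ : ℤ → ℂ) (hf₁zero : f₁ 0 = 1)
    (hf₁neg : ∀ n : ℤ, 1 - (k : ℤ) ≤ n → n < 0 → f₁ n = 0)
    (hf₁rec : ∀ n : ℤ, 0 < n →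
      f₁ n = ∑ j ∈ Finset.Icc (1 : ℤ) (k : ℤ), c j * f₁ (n - j))
    (a : ℕ → ℕ → ℂ) (ha : ∀ r s : ℕ, r + 1 < s → a r s = 0)
    (hval : ∀ n s : ℕ, s ≤ n → a (n+1) (s+1) * (∏ i ∈ Ico s n, a (i+1) (i+2)) =
      if n - s + 1 ≤ k then c ((n : ℤ) - s + 1) else 0) :
    ∀ m : ℕ, perH m a = f₁ (m : ℤ) := by
  intro m
  induction m using Nat.strong_induction_on with
  | _ m ih =>
    match m with
    | 0 => rw [perH_zero]; exact hf₁zero.symm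
    | Nat.succ n =>
      rw [hess_expand a ha n]
      have step : ∀ s ∈ range (n+1),
          a (n+1) (s+1) * (∏ i ∈ Ico s n, a (i+1) (i+2)) * perH s a
          = if n - s + 1 ≤ k then c ((n : ℤ) - s + 1) * f₁ (s : ℤ) else 0 := by
        intro s hsmem
        simp only [mem_range] at hsmem
        rw [hval n s (by omega), ih s (by omega), ite_mul, zero_mul]
      rw [Finset.sum_congr rfl step, ← Finset.sum_filter]
      have hrec := hf₁rec ((n : ℤ) + 1) (by positivity)
      push_cast
      rw [hrec]
      rw [← Finset.sum_filter_add_sum_filter_not (Finset.Icc (1 : ℤ) (k : ℤ))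
        (fun j => j ≤ (n : ℤ) + 1)]
      have hz : (∑ j ∈ (Finset.Icc (1 : ℤ) (k : ℤ)).filter (fun j => ¬ j ≤ (n : ℤ) + 1),
          c j * f₁ ((n : ℤ) + 1 - j)) = 0 := by
        apply Finset.sum_eq_zero
        intro j hj
        simp only [mem_filter, mem_Icc] at hj
        rw [hf₁neg ((n : ℤ) + 1 - j) (by omega) (by omega), mul_zero]
      rw [hz, add_zero]
      apply Finset.sum_nbij' (fun s : ℕ => (n : ℤ) + 1 - s)
        (fun j : ℤ => ((n : ℤ) + 1 - j).toNat)
      · intro s hsmem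
        simp only [mem_filter, mem_range] at hsmem
        simp only [mem_filter, mem_Icc]
        omega
      · intro j hj
        simp only [mem_filter, mem_Icc] at hj
        simp only [mem_filter, mem_range]
        omega
      · intro s hsmem
        simp only [mem_filter, mem_range] at hsmem
        omega
      · intro j hj
        simp only [mem_filter, mem_Icc] at hj
        omega
      · intro s hsmem
        simp only [mem_filter, mem_range] at hsmem
        have h1 : (n : ℤ) - s + 1 = (n : ℤ) + 1 - s := by ring
        have h2 : (n : ℤ) + 1 - ((n : ℤ) + 1 - s) = (s : ℤ) := by ring
        rw [h1, h2]

theorem per_HL_eq_kSOkF (k : ℕ) (hk : 2 ≤ k) (c : ℤ → ℂ) (hc2 : c 2 ≠ 0)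
    (t : ℤ → ℂ) (ht0 : t 0 = 1) (htc : ∀ j : ℤ, 1 ≤ j → j ≤ (k : ℤ) → t j = c j)
    (f₁ : ℤ → ℂ) (hf₁zero : f₁ 0 = 1)
    (hf₁neg : ∀ n : ℤ, 1 - (k : ℤ) ≤ n → n < 0 → f₁ n = 0)
    (hf₁rec : ∀ n : ℤ, 0 < n →
      f₁ n = ∑ j ∈ Finset.Icc (1 : ℤ) (k : ℤ), c j * f₁ (n - j))
    (n : ℕ) (hn : 1 ≤ n) :
    perH n (hEntry k t) = f₁ (n : ℤ) ∧ perH n (lEntry k t) = f₁ (n : ℤ) := by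
  have hc2' : t 2 = c 2 := htc 2 (by omega) (by exact_mod_cast hk)
  have haL : ∀ r s : ℕ, r + 1 < s → lEntry k t r s = 0 := by
    intro r s h
    rw [lEntry, if_neg]
    rintro ⟨h1, -⟩
    omega
  have haH : ∀ r s : ℕ, r + 1 < s → hEntry k t r s = 0 := by
    intro r s h
    rw [hEntry, if_neg]
    rintro ⟨h1, -⟩
    omega
  have hvalL : ∀ m s : ℕ, s ≤ m →
      lEntry k t (m+1) (s+1) * (∏ i ∈ Ico s m, lEntry k t (i+1) (i+2)) =
      if m - s + 1 ≤ k then c ((m : ℤ) - s + 1) else 0 := by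
    intro m s hsm
    have hdiag : ∀ i ∈ Ico s m, lEntry k t (i+1) (i+2) = c 2 := by
      intro i _
      rw [lEntry, if_pos (by constructor <;> push_cast <;> omega)]
      push_cast
      have e1 : (i : ℤ) + 1 - ((i : ℤ) + 2) + 1 = 0 := by ring
      have e2 : (i : ℤ) + 1 - ((i : ℤ) + 2) = -1 := by ring
      rw [e1, e2, ht0, zpow_neg_one, one_div, inv_inv, hc2']
    rw [Finset.prod_congr rfl hdiag, Finset.prod_const, Nat.card_Ico]
    rw [lEntry]
    by_cases hcond : m - s + 1 ≤ k
    · rw [if_pos (by constructor <;> push_cast <;> omega), if_pos hcond]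
      have e3 : ((m + 1 : ℕ) : ℤ) - ((s + 1 : ℕ) : ℤ) = ((m - s : ℕ) : ℤ) := by
        push_cast; omega
      rw [e3, zpow_natCast, htc _ (by omega) (by push_cast; omega), hc2',
        div_mul_cancel₀ _ (pow_ne_zero _ hc2)]
      congr 1
      push_cast
      omega
    · rw [if_neg, if_neg hcond, zero_mul]
      rintro ⟨-, h2⟩
      push_cast at h2
      omega
  have hvalH : ∀ m s : ℕ, s ≤ m →
      hEntry k t (m+1) (s+1) * (∏ i ∈ Ico s m, hEntry k t (i+1) (i+2)) =
      if m - s + 1 ≤ k then c ((m : ℤ) - s + 1) else 0 := by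
    intro m s hsm
    have hdiag : ∀ i ∈ Ico s m, hEntry k t (i+1) (i+2) = Complex.I⁻¹ * c 2 := by
      intro i _
      rw [hEntry, if_pos (by constructor <;> push_cast <;> omega)]
      push_cast
      have e1 : (i : ℤ) + 1 - ((i : ℤ) + 2) + 1 = 0 := by ring
      have e2 : (i : ℤ) + 1 - ((i : ℤ) + 2) = -1 := by ring
      rw [e1, e2, ht0, mul_one, zpow_neg_one, zpow_neg_one, div_inv_eq_mul, hc2']
    rw [Finset.prod_congr rfl hdiag, Finset.prod_const, Nat.card_Ico]
    rw [hEntry]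
    by_cases hcond : m - s + 1 ≤ k
    · rw [if_pos (by constructor <;> push_cast <;> omega), if_pos hcond]
      have e3 : ((m + 1 : ℕ) : ℤ) - ((s + 1 : ℕ) : ℤ) = ((m - s : ℕ) : ℤ) := by
        push_cast; omega
      rw [e3, zpow_natCast, zpow_natCast, htc _ (by omega) (by push_cast; omega), hc2']
      have e4 : ((m - s : ℕ) : ℤ) + 1 = (m : ℤ) - s + 1 := by omega
      rw [e4, mul_pow, inv_pow]
      have hI : (Complex.I : ℂ) ^ (m - s) ≠ 0 := pow_ne_zero _ Complex.I_ne_zero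
      have hc2d : c 2 ^ (m - s) ≠ 0 := pow_ne_zero _ hc2
      field_simp
    · rw [if_neg, if_neg hcond, zero_mul]
      rintro ⟨-, h2⟩
      push_cast at h2
      omega
  exact ⟨perH_eq k c f₁ hf₁zero hf₁neg hf₁rec (hEntry k t) haH hvalH n,
    perH_eq k c f₁ hf₁zero hf₁neg hf₁rec (lEntry k t) haL hvalL n⟩
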